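/- Let K = (V, 2^V) be the full (n−1)-dimensional simplex on a vertex set V with n elements, and let 0 ≤ q ≤ n − 2. Then the restriction of D_q^up to C^q(K,ℂ) has exactly two eigenvalues: 1/(n−q−1) with multiplicity binom(n−1, q+1), and −1/(q+1) with multiplicity binom(n−1, q). -/

import Mathlib

open scoped BigOperators Classical

/-- The set of oriented `q`-simplices of the full `(n−1)`-dimensional simplex on the
vertex set `Fin n`: a `(q+1)`-element vertex set together with one of its two
orientations (`true` denoting the orientation given by the increasing ordering of the
vertices). -/
abbrev FullOSimp (n q : ℕ) : Type := {A : Finset (Fin n) // A.card = q + 1} × Bool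

/-- The orientation reversal `τ ↦ τ̄`. -/
def fbar {n q : ℕ} (τ : FullOSimp n q) : FullOSimp n q := (τ.1, !τ.2)

/-- The sign of an orientation. -/
def bsgn (b : Bool) : ℝ := if b then 1 else -1

/-- The position of the vertex removed from `B` to get `A` (for `A ⊆ B` with one
element removed), in the increasing enumeration of `B`. -/
def remIdx {n : ℕ} (B A : Finset (Fin n)) : ℕ :=
  ∑ a ∈ B \ A, (B.filter (fun b => b < a)).card

/-- The incidence sign `sgn(σ,τ)`: for `σ = ⟨a_0 ⋯ a_{q+1}⟩` (increasing) and
`τ = ⟨a_0 ⋯ â_j ⋯ a_{q+1}⟩` it is `(−1)^j`, extended to both orientations by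
`sgn(σ̄,τ) = sgn(σ,τ̄) = −sgn(σ,τ)`, and `0` if `[τ]` is not a face of `[σ]`. -/
noncomputable def fsgn {n q : ℕ} (σ : FullOSimp n (q + 1)) (τ : FullOSimp n q) : ℝ :=
  if τ.1.1 ⊆ σ.1.1 then (-1 : ℝ) ^ (remIdx σ.1.1 τ.1.1) * bsgn σ.2 * bsgn τ.2 else 0

/-- `deg_X(τ)`: the number of `(q+1)`-dimensional simplices containing `[τ]` as a face. -/
noncomputable def fdegX (n q : ℕ) (τ : FullOSimp n q) : ℕ :=
  (Finset.univ.filter (fun B : Finset (Fin n) => B.card = q + 2 ∧ τ.1.1 ⊆ B)).card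

/-- `η^up(τ₁,τ₂) = sgn(σ,τ₁)·sgn(σ,τ₂)` where `σ` is (either orientation of) the unique
`(q+1)`-simplex containing the up neighbors `[τ₁] ≠ [τ₂]`, and `0` otherwise. -/
noncomputable def fetaUp {n q : ℕ} (τ₁ τ₂ : FullOSimp n q) : ℝ :=
  if h : τ₁.1.1 ≠ τ₂.1.1 ∧ (τ₁.1.1 ∪ τ₂.1.1).card = q + 1 + 1 then
    fsgn (⟨⟨τ₁.1.1 ∪ τ₂.1.1, h.2⟩, true⟩ : FullOSimp n (q + 1)) τ₁ *
      fsgn (⟨⟨τ₁.1.1 ∪ τ₂.1.1, h.2⟩, true⟩ : FullOSimp n (q + 1)) τ₂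
  else 0

/-- The normalization constant `(2(q+1) deg_X τ)^{-1/2}`. -/
noncomputable def fc (n q : ℕ) (τ : FullOSimp n q) : ℂ :=
  ((Real.sqrt (2 * (q + 1) * fdegX n q τ) : ℝ) : ℂ)⁻¹

/-- The matrix of `d_{X_q} : ℓ²(E(X_q)) → ℓ²(K_q)`. -/
noncomputable def fdM (n q : ℕ) : Matrix (FullOSimp n q) (FullOSimp n q × FullOSimp n q) ℂ :=
  fun τ p => if p.1 = τ ∧ fetaUp p.1 p.2 ≠ 0 then fc n q τ else 0

/-- The matrix of `d_{X_q}* : ℓ²(K_q) → ℓ²(E(X_q))`. -/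
noncomputable def fdstarM (n q : ℕ) : Matrix (FullOSimp n q × FullOSimp n q) (FullOSimp n q) ℂ :=
  fun p τ => if p.1 = τ ∧ fetaUp p.1 p.2 ≠ 0 then fc n q τ else 0

/-- The matrix of the shift `(S^up g)(τ₁,τ₂) = η^up(τ₁,τ₂) g(τ₂,τ₁)`. -/
noncomputable def fshiftM (n q : ℕ) :
    Matrix (FullOSimp n q × FullOSimp n q) (FullOSimp n q × FullOSimp n q) ℂ :=
  fun p p' => if p'.1 = p.2 ∧ p'.2 = p.1 then (fetaUp p.1 p.2 : ℂ) else 0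

/-- The up discriminant `D_q^up = d_{X_q} S^up d_{X_q}*` of the full simplex. -/
noncomputable def fdiscM (n q : ℕ) : Matrix (FullOSimp n q) (FullOSimp n q) ℂ :=
  fdM n q * fshiftM n q * fdstarM n q

/-- The cochain space `C^q(K,ℂ) = {f : f(τ̄) = −f(τ)}`. -/
noncomputable def fCSub (n q : ℕ) : Submodule ℂ (FullOSimp n q → ℂ) where
  carrier := {f | ∀ τ, f (fbar τ) = - f τ}
  add_mem' := by
    intro a b ha hb τ
    simp only [Pi.add_apply, ha τ, hb τ]; ring
  zero_mem' := by intro τ; simp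
  smul_mem' := by
    intro c f hf τ
    simp only [Pi.smul_apply, hf τ, smul_eq_mul]; ring

/-- The eigenspace of the restriction of `D_q^up` to `C^q(K,ℂ)` at `μ`. -/
noncomputable def fEig (n q : ℕ) (μ : ℂ) : Submodule ℂ (FullOSimp n q → ℂ) :=
  Module.End.eigenspace (Matrix.mulVecLin (fdiscM n q)) μ ⊓ fCSub n q

section Aux1
variable {n q : ℕ}

lemma remIdx_insert (A : Finset (Fin n)) {x : Fin n} (hx : x ∉ A) :
    remIdx (insert x A) A = (A.filter (fun b => b < x)).card := by
  unfold remIdx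
  rw [Finset.insert_sdiff_cancel hx, Finset.sum_singleton, Finset.filter_insert,
    if_neg (lt_irrefl x)]

lemma remIdx_insert₂ (A : Finset (Fin n)) {x y : Fin n} (hx : x ∉ A) (hy : y ∉ A) (hxy : x ≠ y) :
    remIdx (insert y (insert x A)) (insert x A)
      = (A.filter (fun b => b < y)).card + (if x < y then 1 else 0) := by
  have hy' : y ∉ insert x A := by simp [Finset.mem_insert, hy, Ne.symm hxy]
  rw [remIdx_insert _ hy', Finset.filter_insert]
  split_ifs with h
  · rw [Finset.card_insert_of_notMem (by simp [hx]), add_comm]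
  · rw [add_zero]

lemma neg_one_pow_pair_zero {e₁ e₂ : ℕ} (h : (e₁ + e₂) % 2 = 1) :
    ((-1 : ℂ) ^ e₁) + ((-1 : ℂ) ^ e₂) = 0 := by
  have h2 : ((-1 : ℂ) ^ e₁) * ((-1 : ℂ) ^ e₂) = -1 := by
    rw [← pow_add]; exact Odd.neg_one_pow (Nat.odd_iff.mpr h)
  have h3 : ((-1 : ℂ) ^ e₂) * ((-1 : ℂ) ^ e₂) = 1 := by
    rw [← pow_add]; exact Even.neg_one_pow ⟨e₂, rfl⟩
  have : ((-1 : ℂ) ^ e₁) = -((-1 : ℂ) ^ e₂) := by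
    calc ((-1 : ℂ) ^ e₁) = ((-1:ℂ)^e₁ * ((-1:ℂ)^e₂ * (-1:ℂ)^e₂)) := by rw [h3, mul_one]
    _ = ((-1:ℂ)^e₁ * (-1:ℂ)^e₂) * (-1:ℂ)^e₂ := by ring
    _ = -(-1:ℂ)^e₂ := by rw [h2]; ring
  rw [this]; ring

lemma filter_supset_eq (S : Finset (Fin n)) :
    (Finset.univ.filter (fun B : Finset (Fin n) => B.card = S.card + 1 ∧ S ⊆ B))
      = Sᶜ.image (fun x => insert x S) := by
  ext B
  simp only [Finset.mem_filter, Finset.mem_univ, true_and, Finset.mem_image, Finset.mem_compl]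
  constructor
  · rintro ⟨hc, hSB⟩
    obtain ⟨x, hx⟩ := Finset.card_pos.mp (show 0 < (B \ S).card by
      rw [Finset.card_sdiff_of_subset hSB, hc]; omega)
    rw [Finset.mem_sdiff] at hx
    exact ⟨x, hx.2, Finset.eq_of_subset_of_card_le
      (Finset.insert_subset hx.1 hSB)
      (by rw [hc, Finset.card_insert_of_notMem hx.2])⟩
  · rintro ⟨x, hx, rfl⟩
    exact ⟨Finset.card_insert_of_notMem hx, Finset.subset_insert x S⟩

lemma card_filter_supset (S : Finset (Fin n)) (k : ℕ) (hS : S.card = k) :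
    ((Finset.univ.filter (fun B : Finset (Fin n) => B.card = k + 1 ∧ S ⊆ B)).card) = n - k := by
  subst hS
  rw [filter_supset_eq, Finset.card_image_of_injOn, Finset.card_compl, Fintype.card_fin]
  intro x hx y hy hxy
  simp only [Finset.coe_compl, Set.mem_compl_iff, Finset.mem_coe] at hx hy
  by_contra hne
  have hxy' : insert x S = insert y S := hxy
  have hmem : x ∈ insert y S := hxy' ▸ Finset.mem_insert_self x S
  rcases Finset.mem_insert.mp hmem with h | h
  exacts [hne h, hx h]

lemma sum_ind (m : ℕ) (P : Finset (Fin n) → Prop) [DecidablePred P] :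
    (∑ B : {B : Finset (Fin n) // B.card = m}, if P B.1 then (1 : ℂ) else 0)
      = ((Finset.univ.filter (fun B : Finset (Fin n) => B.card = m ∧ P B)).card : ℂ) := by
  rw [Finset.sum_boole]
  congr 1
  apply Finset.card_bij (fun (B : {B : Finset (Fin n) // B.card = m}) _ => B.1)
  · intro B hB
    simp only [Finset.mem_filter, Finset.mem_univ, true_and] at hB ⊢
    exact ⟨B.2, hB⟩
  · intro B _ B' _ h
    exact Subtype.ext h
  · intro B hB
    simp only [Finset.mem_filter, Finset.mem_univ, true_and] at hB
    exact ⟨⟨B, hB.1⟩, by simp [hB.2], rfl⟩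

end Aux1

section Aux2
open Matrix
variable {n q : ℕ}

noncomputable def Dmat (n k : ℕ) :
    Matrix {B : Finset (Fin n) // B.card = k + 1} {A : Finset (Fin n) // A.card = k} ℂ :=
  fun B A => if A.1 ⊆ B.1 then (((-1 : ℝ) ^ (remIdx B.1 A.1) : ℝ) : ℂ) else 0

noncomputable def epsv (n q : ℕ) (A A' : Finset (Fin n)) : ℝ :=
  if A ≠ A' ∧ (A ∪ A').card = q + 1 + 1 then
    (-1 : ℝ) ^ (remIdx (A ∪ A') A) * (-1 : ℝ) ^ (remIdx (A ∪ A') A') else 0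

noncomputable def Mq (n q : ℕ) :
    Matrix {A : Finset (Fin n) // A.card = q + 1} {A : Finset (Fin n) // A.card = q + 1} ℂ :=
  fun A A' => ((epsv n q A.1 A'.1 : ℝ) : ℂ)

lemma DtD (n q : ℕ) :
    (Dmat n (q + 1))ᵀ * Dmat n (q + 1)
      = Mq n q + (((n - (q + 1) : ℕ) : ℂ)) • (1 : Matrix _ _ ℂ) := by
  ext A A'
  rw [Matrix.mul_apply]
  simp only [Matrix.transpose_apply, Matrix.add_apply, Matrix.smul_apply, Matrix.one_apply,
    smul_eq_mul, Dmat, Mq]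
  by_cases hAA : A = A'
  · subst hAA
    rw [if_pos rfl, mul_one]
    have hterm : ∀ B : {B : Finset (Fin n) // B.card = q + 1 + 1},
        (if A.1 ⊆ B.1 then (((-1:ℝ)^(remIdx B.1 A.1) : ℝ) : ℂ) else 0)
          * (if A.1 ⊆ B.1 then (((-1:ℝ)^(remIdx B.1 A.1) : ℝ) : ℂ) else 0)
        = if A.1 ⊆ B.1 then (1 : ℂ) else 0 := by
      intro B
      split_ifs with h
      · push_cast
        rw [← pow_add]
        exact Even.neg_one_pow ⟨_, rfl⟩
      · ring
    rw [Finset.sum_congr rfl (fun B _ => hterm B), sum_ind (q + 1 + 1) (fun B => A.1 ⊆ B),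
      card_filter_supset A.1 (q + 1) A.2]
    have : epsv n q A.1 A.1 = 0 := by
      unfold epsv
      rw [if_neg (by simp)]
    rw [this]
    push_cast
    ring
  · have hAA1 : A.1 ≠ A'.1 := fun h => hAA (Subtype.ext h)
    rw [if_neg hAA, mul_zero, add_zero]
    have hlt : q + 1 < (A.1 ∪ A'.1).card := by
      have hss : A.1 ⊂ A.1 ∪ A'.1 := by
        refine Finset.ssubset_iff_subset_ne.mpr ⟨Finset.subset_union_left, fun h => ?_⟩
        have : A'.1 ⊆ A.1 := by rw [h]; exact Finset.subset_union_right
        exact hAA1 (Finset.eq_of_subset_of_card_le this (by rw [A.2, A'.2])).symm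
      have := Finset.card_lt_card hss
      omega
    by_cases hU : (A.1 ∪ A'.1).card = q + 1 + 1
    · rw [Finset.sum_eq_single (⟨A.1 ∪ A'.1, hU⟩ : {B : Finset (Fin n) // B.card = q + 1 + 1})]
      · rw [if_pos Finset.subset_union_left, if_pos Finset.subset_union_right]
        unfold epsv
        rw [if_pos ⟨hAA1, hU⟩]
        push_cast
        ring
      · intro B _ hBne
        by_cases h1 : A.1 ⊆ B.1
        · by_cases h2 : A'.1 ⊆ B.1
          · exfalso
            apply hBne
            apply Subtype.ext
            exact (Finset.eq_of_subset_of_card_le (Finset.union_subset h1 h2)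
              (by rw [B.2, hU])).symm
          · rw [if_neg h2, mul_zero]
        · rw [if_neg h1, zero_mul]
      · intro h; exact absurd (Finset.mem_univ _) h
    · have hz : epsv n q A.1 A'.1 = 0 := by
        unfold epsv; rw [if_neg (by tauto)]
      rw [hz]
      push_cast
      apply Finset.sum_eq_zero
      intro B _
      by_cases h1 : A.1 ⊆ B.1
      · by_cases h2 : A'.1 ⊆ B.1
        · exfalso
          apply hU
          have hle := Finset.card_le_card (Finset.union_subset h1 h2)
          rw [B.2] at hle
          omega
        · rw [if_neg h2, mul_zero]
      · rw [if_neg h1, zero_mul]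

end Aux2

section Aux3
open Matrix
variable {n q : ℕ}

lemma Dsucc_D (n q : ℕ) : Dmat n (q + 2) * Dmat n (q + 1) = 0 := by
  ext C A
  rw [Matrix.mul_apply, Matrix.zero_apply]
  by_cases hAC : A.1 ⊆ C.1
  · obtain ⟨x, y, hxy, hsd⟩ := Finset.card_eq_two.mp
      (show (C.1 \ A.1).card = 2 by rw [Finset.card_sdiff_of_subset hAC, C.2, A.2]; omega)
    have hx : x ∈ C.1 \ A.1 := by rw [hsd]; simp
    have hy : y ∈ C.1 \ A.1 := by rw [hsd]; simp
    rw [Finset.mem_sdiff] at hx hy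
    have hxA : x ∉ A.1 := hx.2
    have hyA : y ∉ A.1 := hy.2
    have hC : C.1 = insert y (insert x A.1) := by
      have h1 : A.1 ∪ (C.1 \ A.1) = C.1 := Finset.union_sdiff_of_subset hAC
      rw [hsd] at h1
      rw [← h1]
      ext a
      simp only [Finset.mem_union, Finset.mem_insert, Finset.mem_singleton]
      tauto
    have hC' : C.1 = insert x (insert y A.1) := by
      rw [hC]; ext a; simp only [Finset.mem_insert]; tauto
    set B₁ : {B : Finset (Fin n) // B.card = q + 1 + 1} :=
      ⟨insert x A.1, by rw [Finset.card_insert_of_notMem hxA, A.2]⟩ with hB₁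
    set B₂ : {B : Finset (Fin n) // B.card = q + 1 + 1} :=
      ⟨insert y A.1, by rw [Finset.card_insert_of_notMem hyA, A.2]⟩ with hB₂
    have hB12 : B₁ ≠ B₂ := by
      intro h
      have : x ∈ insert y A.1 := by
        rw [show insert y A.1 = B₂.1 from rfl, ← h]
        exact Finset.mem_insert_self x A.1
      rcases Finset.mem_insert.mp this with h' | h'
      exacts [hxy h', hxA h']
    rw [← Finset.sum_subset (Finset.subset_univ {B₁, B₂}) (fun B _ hB => ?_)]
    · rw [Finset.sum_pair hB12]
      have s1 : B₁.1 ⊆ C.1 := by rw [hC]; exact Finset.subset_insert _ _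
      have s2 : A.1 ⊆ B₁.1 := Finset.subset_insert _ _
      have s3 : B₂.1 ⊆ C.1 := by rw [hC']; exact Finset.subset_insert _ _
      have s4 : A.1 ⊆ B₂.1 := Finset.subset_insert _ _
      unfold Dmat
      rw [if_pos s1, if_pos s2, if_pos s3, if_pos s4]
      have r1 : remIdx C.1 B₁.1 = (A.1.filter (fun b => b < y)).card + (if x < y then 1 else 0) := by
        rw [hC]; exact remIdx_insert₂ A.1 hxA hyA hxy
      have r2 : remIdx C.1 B₂.1 = (A.1.filter (fun b => b < x)).card + (if y < x then 1 else 0) := by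
        rw [hC']; exact remIdx_insert₂ A.1 hyA hxA (Ne.symm hxy)
      have r3 : remIdx B₁.1 A.1 = (A.1.filter (fun b => b < x)).card := remIdx_insert A.1 hxA
      have r4 : remIdx B₂.1 A.1 = (A.1.filter (fun b => b < y)).card := remIdx_insert A.1 hyA
      rw [r1, r2, r3, r4]
      push_cast
      rw [← pow_add, ← pow_add]
      apply neg_one_pow_pair_zero
      have hone : (if x < y then 1 else 0) + (if y < x then 1 else 0) = 1 := by
        rcases lt_or_gt_of_ne hxy with h | h
        · rw [if_pos h, if_neg (asymm h)]
        · rw [if_neg (asymm h), if_pos h]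
      omega
    · -- vanishing outside the pair
      by_cases h1 : B.1 ⊆ C.1
      · by_cases h2 : A.1 ⊆ B.1
        · exfalso
          obtain ⟨z, hz⟩ := Finset.card_eq_one.mp
            (show (B.1 \ A.1).card = 1 by rw [Finset.card_sdiff_of_subset h2, B.2, A.2]; omega)
          have hzmem : z ∈ C.1 \ A.1 := by
            have : z ∈ B.1 \ A.1 := by rw [hz]; simp
            rw [Finset.mem_sdiff] at this ⊢
            exact ⟨h1 this.1, this.2⟩
          have hBz : B.1 = insert z A.1 := by
            have h3 : A.1 ∪ (B.1 \ A.1) = B.1 := Finset.union_sdiff_of_subset h2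
            rw [hz] at h3
            rw [← h3]
            ext a
            simp only [Finset.mem_union, Finset.mem_insert, Finset.mem_singleton]
            tauto
          rw [hsd, Finset.mem_insert, Finset.mem_singleton] at hzmem
          apply hB
          rcases hzmem with h' | h'
          · exact Finset.mem_insert.mpr (Or.inl (Subtype.ext (by rw [hBz, h'])))
          · refine Finset.mem_insert.mpr (Or.inr ?_)
            rw [Finset.mem_singleton]
            exact Subtype.ext (by rw [hBz, h'])
        · unfold Dmat; rw [if_neg h2, mul_zero]
      · unfold Dmat; rw [if_neg h1, zero_mul]
  · apply Finset.sum_eq_zero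
    intro B _
    unfold Dmat
    by_cases h1 : B.1 ⊆ C.1
    · by_cases h2 : A.1 ⊆ B.1
      · exact absurd (h2.trans h1) hAC
      · rw [if_neg h2, mul_zero]
    · rw [if_neg h1, zero_mul]

end Aux3

section Aux4
open Matrix
variable {n q : ℕ}

lemma DDt_add (hq : q + 2 ≤ n) :
    Dmat n (q + 1) * (Dmat n (q + 1))ᵀ + (Dmat n (q + 2))ᵀ * Dmat n (q + 2)
      = (n : ℂ) • (1 : Matrix {B : Finset (Fin n) // B.card = q + 1 + 1} _ ℂ) := by
  ext B B'
  simp only [Matrix.add_apply, Matrix.mul_apply, Matrix.transpose_apply, Matrix.smul_apply,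
    Matrix.one_apply, smul_eq_mul, Dmat]
  by_cases hBB : B = B'
  · subst hBB
    rw [if_pos rfl, mul_one]
    have hterm1 : ∀ A : {A : Finset (Fin n) // A.card = q + 1},
        ((if A.1 ⊆ B.1 then (((-1:ℝ)^(remIdx B.1 A.1) : ℝ) : ℂ) else 0)
          * (if A.1 ⊆ B.1 then (((-1:ℝ)^(remIdx B.1 A.1) : ℝ) : ℂ) else 0))
        = if A.1 ⊆ B.1 then (1 : ℂ) else 0 := by
      intro A
      split_ifs with h
      · push_cast; rw [← pow_add]; exact Even.neg_one_pow ⟨_, rfl⟩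
      · ring
    have hterm2 : ∀ C : {C : Finset (Fin n) // C.card = q + 2 + 1},
        ((if B.1 ⊆ C.1 then (((-1:ℝ)^(remIdx C.1 B.1) : ℝ) : ℂ) else 0)
          * (if B.1 ⊆ C.1 then (((-1:ℝ)^(remIdx C.1 B.1) : ℝ) : ℂ) else 0))
        = if B.1 ⊆ C.1 then (1 : ℂ) else 0 := by
      intro C
      split_ifs with h
      · push_cast; rw [← pow_add]; exact Even.neg_one_pow ⟨_, rfl⟩
      · ring
    rw [Finset.sum_congr rfl (fun A _ => hterm1 A), Finset.sum_congr rfl (fun C _ => hterm2 C),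
      sum_ind (q + 1) (fun A => A ⊆ B.1), sum_ind (q + 2 + 1) (fun C => B.1 ⊆ C)]
    have hc1 : (Finset.univ.filter
        (fun A : Finset (Fin n) => A.card = q + 1 ∧ A ⊆ B.1)).card = q + 2 := by
      have he : Finset.univ.filter (fun A : Finset (Fin n) => A.card = q + 1 ∧ A ⊆ B.1)
          = B.1.powersetCard (q + 1) := by
        ext A
        simp only [Finset.mem_filter, Finset.mem_univ, true_and, Finset.mem_powersetCard]
        tauto
      rw [he, Finset.card_powersetCard, B.2, Nat.choose_succ_self_right]
    have hc2 : (Finset.univ.filter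
        (fun C : Finset (Fin n) => C.card = (q + 2) + 1 ∧ B.1 ⊆ C)).card = n - (q + 2) := by
      exact card_filter_supset B.1 (q + 2) B.2
    rw [hc1, hc2]
    have : (q + 2) + (n - (q + 2)) = n := by omega
    exact_mod_cast congrArg (Nat.cast : ℕ → ℂ) this
  · have hBB1 : B.1 ≠ B'.1 := fun h => hBB (Subtype.ext h)
    rw [if_neg hBB, mul_zero]
    have hIle : (B.1 ∩ B'.1).card ≤ q + 2 := by
      have := Finset.card_le_card (Finset.inter_subset_left : B.1 ∩ B'.1 ⊆ B.1)
      rw [B.2] at this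
      omega
    have hIne : (B.1 ∩ B'.1).card ≠ q + 2 := by
      intro h
      have h1 : B.1 ∩ B'.1 = B.1 :=
        Finset.eq_of_subset_of_card_le Finset.inter_subset_left (by rw [B.2, h])
      have h2 : B.1 ⊆ B'.1 := by rw [← h1]; exact Finset.inter_subset_right
      exact hBB1 (Finset.eq_of_subset_of_card_le h2 (by rw [B.2, B'.2]))
    by_cases hI : (B.1 ∩ B'.1).card = q + 1
    · -- adjacent case
      set A₀ := B.1 ∩ B'.1 with hA₀
      obtain ⟨x, hxs⟩ := Finset.card_eq_one.mp (show (B.1 \ B'.1).card = 1 by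
        rw [← Finset.sdiff_inter_self_left B.1 B'.1, Finset.card_sdiff_of_subset Finset.inter_subset_left,
          B.2, hI]; omega)
      obtain ⟨y, hys⟩ := Finset.card_eq_one.mp (show (B'.1 \ B.1).card = 1 by
        rw [← Finset.sdiff_inter_self_left B'.1 B.1, Finset.card_sdiff_of_subset Finset.inter_subset_left,
          B'.2, Finset.inter_comm, hI]; omega)
      have hxm : x ∈ B.1 ∧ x ∉ B'.1 := by
        have : x ∈ B.1 \ B'.1 := by rw [hxs]; simp
        exact Finset.mem_sdiff.mp this
      have hym : y ∈ B'.1 ∧ y ∉ B.1 := by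
        have : y ∈ B'.1 \ B.1 := by rw [hys]; simp
        exact Finset.mem_sdiff.mp this
      have hxy : x ≠ y := fun h => hxm.2 (h ▸ hym.1)
      have hxA : x ∉ A₀ := fun h => hxm.2 (Finset.mem_inter.mp h).2
      have hyA : y ∉ A₀ := fun h => hym.2 (Finset.mem_inter.mp h).1
      have hB : B.1 = insert x A₀ := by
        ext a
        simp only [Finset.mem_insert, hA₀, Finset.mem_inter]
        constructor
        · intro ha
          by_cases h' : a ∈ B'.1
          · exact Or.inr ⟨ha, h'⟩
          · left
            have : a ∈ B.1 \ B'.1 := Finset.mem_sdiff.mpr ⟨ha, h'⟩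
            rw [hxs, Finset.mem_singleton] at this
            exact this
        · rintro (rfl | h')
          exacts [hxm.1, h'.1]
      have hB' : B'.1 = insert y A₀ := by
        ext a
        simp only [Finset.mem_insert, hA₀, Finset.mem_inter]
        constructor
        · intro ha
          by_cases h' : a ∈ B.1
          · exact Or.inr ⟨h', ha⟩
          · left
            have : a ∈ B'.1 \ B.1 := Finset.mem_sdiff.mpr ⟨ha, h'⟩
            rw [hys, Finset.mem_singleton] at this
            exact this
        · rintro (rfl | h')
          exacts [hym.1, h'.2]
      have hU : B.1 ∪ B'.1 = insert y (insert x A₀) := by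
        rw [hB, hB']
        ext a
        simp only [Finset.mem_union, Finset.mem_insert]
        tauto
      have hU' : B.1 ∪ B'.1 = insert x (insert y A₀) := by
        rw [hU]; ext a; simp only [Finset.mem_insert]; tauto
      have hyxA : y ∉ insert x A₀ := by
        simp only [Finset.mem_insert]
        push_neg
        exact ⟨Ne.symm hxy, hyA⟩
      have hUcard : (B.1 ∪ B'.1).card = q + 2 + 1 := by
        rw [hU, Finset.card_insert_of_notMem hyxA, Finset.card_insert_of_notMem hxA]
        have : A₀.card = q + 1 := hI
        omega
      have hsum1 : (∑ A : {A : Finset (Fin n) // A.card = q + 1},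
          (if A.1 ⊆ B.1 then (((-1:ℝ)^(remIdx B.1 A.1) : ℝ) : ℂ) else 0)
            * (if A.1 ⊆ B'.1 then (((-1:ℝ)^(remIdx B'.1 A.1) : ℝ) : ℂ) else 0))
          = (-1 : ℂ) ^ ((A₀.filter (fun b => b < x)).card + (A₀.filter (fun b => b < y)).card) := by
        rw [Finset.sum_eq_single (⟨A₀, hI⟩ : {A : Finset (Fin n) // A.card = q + 1})]
        · rw [if_pos Finset.inter_subset_left, if_pos Finset.inter_subset_right]
          have r1 : remIdx B.1 A₀ = (A₀.filter (fun b => b < x)).card := by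
            rw [hB]; exact remIdx_insert A₀ hxA
          have r2 : remIdx B'.1 A₀ = (A₀.filter (fun b => b < y)).card := by
            rw [hB']; exact remIdx_insert A₀ hyA
          show (((-1:ℝ)^(remIdx B.1 A₀) : ℝ) : ℂ) * (((-1:ℝ)^(remIdx B'.1 A₀) : ℝ) : ℂ) = _
          rw [r1, r2]
          push_cast
          rw [← pow_add]
        · intro A _ hAne
          by_cases h1 : A.1 ⊆ B.1
          · by_cases h2 : A.1 ⊆ B'.1
            · exfalso
              apply hAne
              apply Subtype.ext
              exact Finset.eq_of_subset_of_card_le (Finset.subset_inter h1 h2)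
                (by rw [A.2, hI])
            · rw [if_neg h2, mul_zero]
          · rw [if_neg h1, zero_mul]
        · intro h; exact absurd (Finset.mem_univ _) h
      have hsum2 : (∑ C : {C : Finset (Fin n) // C.card = q + 2 + 1},
          (if B.1 ⊆ C.1 then (((-1:ℝ)^(remIdx C.1 B.1) : ℝ) : ℂ) else 0)
            * (if B'.1 ⊆ C.1 then (((-1:ℝ)^(remIdx C.1 B'.1) : ℝ) : ℂ) else 0))
          = (-1 : ℂ) ^ (((A₀.filter (fun b => b < y)).card + (if x < y then 1 else 0))
              + ((A₀.filter (fun b => b < x)).card + (if y < x then 1 else 0))) := by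
        rw [Finset.sum_eq_single (⟨B.1 ∪ B'.1, hUcard⟩ : {C : Finset (Fin n) // C.card = q + 2 + 1})]
        · rw [if_pos Finset.subset_union_left, if_pos Finset.subset_union_right]
          have r1 : remIdx (B.1 ∪ B'.1) B.1
              = (A₀.filter (fun b => b < y)).card + (if x < y then 1 else 0) := by
            rw [hU, hB]; exact remIdx_insert₂ A₀ hxA hyA hxy
          have r2 : remIdx (B.1 ∪ B'.1) B'.1
              = (A₀.filter (fun b => b < x)).card + (if y < x then 1 else 0) := by
            rw [hU', hB']; exact remIdx_insert₂ A₀ hyA hxA (Ne.symm hxy)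
          show (((-1:ℝ)^(remIdx (B.1 ∪ B'.1) B.1) : ℝ) : ℂ)
              * (((-1:ℝ)^(remIdx (B.1 ∪ B'.1) B'.1) : ℝ) : ℂ) = _
          rw [r1, r2]
          push_cast
          rw [← pow_add]
        · intro C _ hCne
          by_cases h1 : B.1 ⊆ C.1
          · by_cases h2 : B'.1 ⊆ C.1
            · exfalso
              apply hCne
              apply Subtype.ext
              exact (Finset.eq_of_subset_of_card_le (Finset.union_subset h1 h2)
                (by rw [C.2, hUcard])).symm
            · rw [if_neg h2, mul_zero]
          · rw [if_neg h1, zero_mul]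
        · intro h; exact absurd (Finset.mem_univ _) h
      rw [hsum1, hsum2]
      apply neg_one_pow_pair_zero
      have hone : (if x < y then 1 else 0) + (if y < x then 1 else 0) = 1 := by
        rcases lt_or_gt_of_ne hxy with h | h
        · rw [if_pos h, if_neg (asymm h)]
        · rw [if_neg (asymm h), if_pos h]
      omega
    · -- far case : both sums vanish
      have hs1 : (∑ A : {A : Finset (Fin n) // A.card = q + 1},
          (if A.1 ⊆ B.1 then (((-1:ℝ)^(remIdx B.1 A.1) : ℝ) : ℂ) else 0)
            * (if A.1 ⊆ B'.1 then (((-1:ℝ)^(remIdx B'.1 A.1) : ℝ) : ℂ) else 0)) = 0 := by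
        apply Finset.sum_eq_zero
        intro A _
        by_cases h1 : A.1 ⊆ B.1
        · by_cases h2 : A.1 ⊆ B'.1
          · exfalso
            have := Finset.card_le_card (Finset.subset_inter h1 h2)
            rw [A.2] at this
            omega
          · rw [if_neg h2, mul_zero]
        · rw [if_neg h1, zero_mul]
      have hs2 : (∑ C : {C : Finset (Fin n) // C.card = q + 2 + 1},
          (if B.1 ⊆ C.1 then (((-1:ℝ)^(remIdx C.1 B.1) : ℝ) : ℂ) else 0)
            * (if B'.1 ⊆ C.1 then (((-1:ℝ)^(remIdx C.1 B'.1) : ℝ) : ℂ) else 0)) = 0 := by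
        apply Finset.sum_eq_zero
        intro C _
        by_cases h1 : B.1 ⊆ C.1
        · by_cases h2 : B'.1 ⊆ C.1
          · exfalso
            have hcu := Finset.card_le_card (Finset.union_subset h1 h2)
            have hca := Finset.card_union_add_card_inter B.1 B'.1
            rw [B.2, B'.2] at hca
            rw [C.2] at hcu
            omega
          · rw [if_neg h2, mul_zero]
        · rw [if_neg h1, zero_mul]
      rw [hs1, hs2, add_zero]

end Aux4

section Aux5
open Matrix
variable {n q : ℕ}

lemma L_quad (hq : q + 2 ≤ n) :
    ((Dmat n (q + 1))ᵀ * Dmat n (q + 1)) * ((Dmat n (q + 1))ᵀ * Dmat n (q + 1))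
      = (n : ℂ) • ((Dmat n (q + 1))ᵀ * Dmat n (q + 1)) := by
  have h4 := DDt_add (n := n) (q := q) hq
  have h3 := Dsucc_D n q
  have hDDt : Dmat n (q + 1) * (Dmat n (q + 1))ᵀ
      = (n : ℂ) • (1 : Matrix {B : Finset (Fin n) // B.card = q + 1 + 1} _ ℂ)
        - (Dmat n (q + 2))ᵀ * Dmat n (q + 2) := eq_sub_of_add_eq h4
  calc ((Dmat n (q + 1))ᵀ * Dmat n (q + 1)) * ((Dmat n (q + 1))ᵀ * Dmat n (q + 1))
      = (Dmat n (q + 1))ᵀ * ((Dmat n (q + 1) * (Dmat n (q + 1))ᵀ) * Dmat n (q + 1)) := by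
        rw [← Matrix.mul_assoc, ← Matrix.mul_assoc, Matrix.mul_assoc ((Dmat n (q+1))ᵀ)]
    _ = (Dmat n (q + 1))ᵀ * (((n : ℂ) • (1 : Matrix _ _ ℂ)
          - (Dmat n (q + 2))ᵀ * Dmat n (q + 2)) * Dmat n (q + 1)) := by rw [hDDt]
    _ = (Dmat n (q + 1))ᵀ * ((n : ℂ) • Dmat n (q + 1)
          - (Dmat n (q + 2))ᵀ * (Dmat n (q + 2) * Dmat n (q + 1))) := by
        rw [Matrix.sub_mul, Matrix.smul_mul, Matrix.one_mul, Matrix.mul_assoc]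
    _ = (Dmat n (q + 1))ᵀ * ((n : ℂ) • Dmat n (q + 1)) := by
        rw [h3, Matrix.mul_zero, sub_zero]
    _ = (n : ℂ) • ((Dmat n (q + 1))ᵀ * Dmat n (q + 1)) := by
        rw [Matrix.mul_smul]

lemma Mq_quad (hq : q + 2 ≤ n) :
    (Mq n q - ((q : ℂ) + 1) • 1) * (Mq n q - (-((n : ℂ) - q - 1)) • 1) = 0 := by
  have hd : ((n - (q + 1) : ℕ) : ℂ) = (n : ℂ) - q - 1 := by
    have : (q : ℂ) + 1 = ((q + 1 : ℕ) : ℂ) := by push_cast; ring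
    rw [Nat.cast_sub (by omega : q + 1 ≤ n)]
    push_cast
    ring
  have hM : Mq n q = (Dmat n (q + 1))ᵀ * Dmat n (q + 1) - ((n : ℂ) - q - 1) • 1 := by
    have := (DtD n q).symm
    rw [hd] at this
    exact eq_sub_of_add_eq this
  rw [hM]
  rw [neg_smul, sub_neg_eq_add, sub_add_cancel]
  have e1 : (Dmat n (q + 1))ᵀ * Dmat n (q + 1) - ((n : ℂ) - q - 1) • 1 - ((q : ℂ) + 1) • 1
      = (Dmat n (q + 1))ᵀ * Dmat n (q + 1) - (n : ℂ) • 1 := by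
    rw [sub_sub, ← add_smul]
    congr 1
    ring_nf
  rw [e1, sub_mul, L_quad hq, Matrix.smul_mul, Matrix.one_mul, sub_self]

end Aux5

section Aux6
open Matrix
variable {n q : ℕ}

lemma mulVecLin_sub_smul_one {m : Type*} [Fintype m] [DecidableEq m] (M : Matrix m m ℂ) (c : ℂ) :
    (M - c • (1 : Matrix m m ℂ)).mulVecLin = M.mulVecLin - c • (1 : Module.End ℂ (m → ℂ)) := by
  apply LinearMap.ext
  intro v
  rw [Matrix.mulVecLin_apply, Matrix.sub_mulVec, Matrix.smul_mulVec, Matrix.one_mulVec]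
  rfl

lemma T0_quad (hq : q + 2 ≤ n) :
    ((Mq n q).mulVecLin - ((q : ℂ) + 1) • 1)
      * ((Mq n q).mulVecLin - (-((n : ℂ) - q - 1)) • 1) = 0 := by
  have h := congrArg Matrix.mulVecLin (Mq_quad (n := n) (q := q) hq)
  rw [Matrix.mulVecLin_mul, mulVecLin_sub_smul_one, mulVecLin_sub_smul_one,
    Matrix.mulVecLin_zero] at h
  exact h

section EndLemmas
variable {W : Type*} [AddCommGroup W] [Module ℂ W]

lemma eig_mem_of_quad (T : Module.End ℂ W) (a b : ℂ)
    (hT : (T - a • 1) * (T - b • 1) = 0) {ν : ℂ}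
    (h : Module.End.eigenspace T ν ≠ ⊥) : ν = a ∨ ν = b := by
  obtain ⟨x, hx, hx0⟩ := Submodule.exists_mem_ne_zero_of_ne_bot h
  rw [Module.End.mem_eigenspace_iff] at hx
  have h1 : (T - b • 1) x = (ν - b) • x := by
    rw [LinearMap.sub_apply, LinearMap.smul_apply, Module.End.one_apply, hx, sub_smul]
  have h2 : ((T - a • 1) * (T - b • 1)) x = ((ν - b) * (ν - a)) • x := by
    rw [Module.End.mul_apply, h1, _root_.map_smul, LinearMap.sub_apply, LinearMap.smul_apply,
      Module.End.one_apply, hx, ← sub_smul, smul_smul]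
  rw [hT, LinearMap.zero_apply] at h2
  have h3 : ((ν - b) * (ν - a)) = 0 := by
    rcases smul_eq_zero.mp h2.symm with h' | h'
    · exact h'
    · exact absurd h' hx0
  rcases mul_eq_zero.mp h3 with h' | h'
  · exact Or.inr (sub_eq_zero.mp h')
  · exact Or.inl (sub_eq_zero.mp h')

end EndLemmas
end Aux6

section Aux7
variable {W : Type*} [AddCommGroup W] [Module ℂ W]

lemma endo_comm (T : Module.End ℂ W) (a b : ℂ) :
    (T - a • 1) * (T - b • 1) = (T - b • 1) * (T - a • 1) := by
  simp only [sub_mul, mul_sub, mul_smul_comm, smul_mul_assoc, mul_one, one_mul, smul_smul,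
    smul_sub]
  rw [mul_comm a b]
  abel

lemma eig_finrank_of_quad [FiniteDimensional ℂ W] (T : Module.End ℂ W) (a b : ℂ) (hab : a ≠ b)
    (hT : (T - a • 1) * (T - b • 1) = 0) :
    ((Module.finrank ℂ (Module.End.eigenspace T a) : ℂ)) * (a - b)
      = LinearMap.trace ℂ W T - b * (Module.finrank ℂ W : ℂ) := by
  have hab' : a - b ≠ 0 := sub_ne_zero.mpr hab
  set P : Module.End ℂ W := (a - b)⁻¹ • (T - b • 1) with hP
  have hSS : (T - b • 1) * (T - b • 1) = (a - b) • (T - b • 1) := by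
    have hsplit : T - b • 1 = (T - a • 1) + (a - b) • 1 := by
      rw [sub_smul]; abel
    calc (T - b • 1) * (T - b • 1)
        = ((T - a • 1) + (a - b) • 1) * (T - b • 1) := by rw [← hsplit]
      _ = (T - a • 1) * (T - b • 1) + (a - b) • ((1 : Module.End ℂ W) * (T - b • 1)) := by
          rw [add_mul, smul_mul_assoc]
      _ = (a - b) • (T - b • 1) := by rw [hT, zero_add, one_mul]
  have hPP : P * P = P := by
    rw [hP, smul_mul_assoc, mul_smul_comm, hSS, smul_smul, smul_smul]
    congr 1
    field_simp
  have hproj : LinearMap.IsProj (LinearMap.range P) P := by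
    refine ⟨fun x => LinearMap.mem_range_self _ _, ?_⟩
    rintro x ⟨y, rfl⟩
    have := DFunLike.congr_fun hPP y
    rwa [Module.End.mul_apply] at this
  have hrange : Module.End.eigenspace T a = LinearMap.range P := by
    ext x
    rw [Module.End.mem_eigenspace_iff]
    constructor
    · intro hx
      refine ⟨x, ?_⟩
      rw [hP, LinearMap.smul_apply, LinearMap.sub_apply, LinearMap.smul_apply,
        Module.End.one_apply, hx, ← sub_smul, smul_smul, inv_mul_cancel₀ hab', one_smul]
    · rintro ⟨y, rfl⟩
      have h0 : (T - a • 1) * P = 0 := by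
        rw [hP, mul_smul_comm, hT, smul_zero]
      have h1 := DFunLike.congr_fun h0 y
      simpa [sub_eq_zero] using h1
  have htr : LinearMap.trace ℂ W P = (Module.finrank ℂ (LinearMap.range P) : ℂ) :=
    hproj.trace
  have h2 : LinearMap.trace ℂ W P
      = (a - b)⁻¹ * (LinearMap.trace ℂ W T - b * (Module.finrank ℂ W : ℂ)) := by
    rw [hP, map_smul, map_sub, map_smul, LinearMap.trace_one, smul_eq_mul, smul_eq_mul]
    try ring
  rw [hrange, ← htr, h2]
  field_simp

lemma eigenspace_smul_eq (c : ℂ) (hc : c ≠ 0) (T : Module.End ℂ W) (lam : ℂ) :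
    Module.End.eigenspace (c • T) (c * lam) = Module.End.eigenspace T lam := by
  ext x
  rw [Module.End.mem_eigenspace_iff, Module.End.mem_eigenspace_iff, LinearMap.smul_apply,
    mul_smul]
  exact (smul_right_injective W hc).eq_iff

end Aux7

section Aux8
open Matrix
variable {n q : ℕ}

lemma trace_Mq (n q : ℕ) : LinearMap.trace ℂ _ (Mq n q).mulVecLin = 0 := by
  rw [← Matrix.toLin'_apply', LinearMap.trace_eq_matrix_trace ℂ (Pi.basisFun ℂ _),
    LinearMap.toMatrix_eq_toMatrix', LinearMap.toMatrix'_toLin']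
  unfold Matrix.trace
  apply Finset.sum_eq_zero
  intro A _
  unfold Matrix.diag Mq epsv
  rw [if_neg (by simp)]
  simp

lemma fetaUp_eq (τ τ' : FullOSimp n q) :
    fetaUp τ τ' = epsv n q τ.1.1 τ'.1.1 * bsgn τ.2 * bsgn τ'.2 := by
  unfold fetaUp epsv fsgn
  by_cases h : τ.1.1 ≠ τ'.1.1 ∧ (τ.1.1 ∪ τ'.1.1).card = q + 1 + 1
  · rw [dif_pos h, if_pos h, if_pos (Finset.subset_union_left : τ.1.1 ⊆ τ.1.1 ∪ τ'.1.1),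
      if_pos (Finset.subset_union_right : τ'.1.1 ⊆ τ.1.1 ∪ τ'.1.1)]
    show ((-1 : ℝ) ^ _ * bsgn true * bsgn τ.2) * ((-1 : ℝ) ^ _ * bsgn true * bsgn τ'.2) = _
    simp only [bsgn, if_pos]
    ring
  · rw [dif_neg h, if_neg h]
    ring

lemma fetaUp_symm (τ τ' : FullOSimp n q) : fetaUp τ' τ = fetaUp τ τ' := by
  rw [fetaUp_eq, fetaUp_eq]
  have he : epsv n q τ'.1.1 τ.1.1 = epsv n q τ.1.1 τ'.1.1 := by
    unfold epsv
    by_cases h : τ.1.1 ≠ τ'.1.1 ∧ (τ.1.1 ∪ τ'.1.1).card = q + 1 + 1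
    · have h' : τ'.1.1 ≠ τ.1.1 ∧ (τ'.1.1 ∪ τ.1.1).card = q + 1 + 1 :=
        ⟨h.1.symm, by rw [Finset.union_comm]; exact h.2⟩
      rw [if_pos h', if_pos h, Finset.union_comm τ'.1.1 τ.1.1]
      ring
    · have h' : ¬(τ'.1.1 ≠ τ.1.1 ∧ (τ'.1.1 ∪ τ.1.1).card = q + 1 + 1) := by
        rw [Finset.union_comm, ne_comm]
        exact h
      rw [if_neg h', if_neg h]
  rw [he]
  ring

lemma fdegX_eq (τ : FullOSimp n q) : fdegX n q τ = n - (q + 1) := by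
  unfold fdegX
  exact card_filter_supset τ.1.1 (q + 1) τ.1.2

lemma fc_mul (hq : q + 2 ≤ n) (τ τ' : FullOSimp n q) :
    (2 : ℂ) * (fc n q τ * fc n q τ') = (((q : ℂ) + 1) * ((n : ℂ) - q - 1))⁻¹ := by
  unfold fc
  rw [fdegX_eq, fdegX_eq]
  set v : ℝ := 2 * ((q : ℝ) + 1) * ((n - (q + 1) : ℕ) : ℝ) with hv
  have hv0 : (0 : ℝ) ≤ v := by positivity
  have hsq : Real.sqrt v * Real.sqrt v = v := Real.mul_self_sqrt hv0
  have hcast : ((v : ℝ) : ℂ) = 2 * (((q : ℂ) + 1) * ((n : ℂ) - q - 1)) := by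
    rw [hv]
    rw [Nat.cast_sub (by omega : q + 1 ≤ n)]
    push_cast
    ring
  have h1 : ((q : ℂ) + 1) ≠ 0 := by
    have : ((q : ℂ) + 1) = ((q + 1 : ℕ) : ℂ) := by push_cast; ring
    rw [this]
    exact Nat.cast_ne_zero.mpr (by omega)
  have h2 : ((n : ℂ) - q - 1) ≠ 0 := by
    have : ((n : ℂ) - q - 1) = ((n - (q + 1) : ℕ) : ℂ) := by
      rw [Nat.cast_sub (by omega : q + 1 ≤ n)]; push_cast; ring
    rw [this]
    exact Nat.cast_ne_zero.mpr (by omega)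
  calc (2 : ℂ) * ((((Real.sqrt v : ℝ)) : ℂ)⁻¹ * (((Real.sqrt v : ℝ)) : ℂ)⁻¹)
      = 2 * ((((Real.sqrt v * Real.sqrt v : ℝ)) : ℂ))⁻¹ := by
        rw [Complex.ofReal_mul, mul_inv]
    _ = 2 * (((v : ℝ) : ℂ))⁻¹ := by rw [hsq]
    _ = (((q : ℂ) + 1) * ((n : ℂ) - q - 1))⁻¹ := by
        rw [hcast]
        field_simp

end Aux8

section Aux9
open Matrix
variable {n q : ℕ}

lemma fdiscM_apply (τ τ' : FullOSimp n q) :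
    fdiscM n q τ τ' = fc n q τ * fc n q τ' * ((fetaUp τ τ' : ℝ) : ℂ) := by
  unfold fdiscM
  rw [Matrix.mul_apply]
  have inner : ∀ p' : FullOSimp n q × FullOSimp n q,
      (fdM n q * fshiftM n q) τ p'
        = if p'.2 = τ ∧ fetaUp p'.2 p'.1 ≠ 0
            then fc n q τ * ((fetaUp p'.2 p'.1 : ℝ) : ℂ) else 0 := by
    intro p'
    rw [Matrix.mul_apply]
    rw [Finset.sum_eq_single (p'.2, p'.1)]
    · show (if p'.2 = τ ∧ fetaUp p'.2 p'.1 ≠ 0 then fc n q τ else 0)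
          * (if p'.1 = p'.1 ∧ p'.2 = p'.2 then ((fetaUp p'.2 p'.1 : ℝ) : ℂ) else 0) = _
      rw [if_pos (⟨rfl, rfl⟩ : p'.1 = p'.1 ∧ p'.2 = p'.2)]
      by_cases h : p'.2 = τ ∧ fetaUp p'.2 p'.1 ≠ 0
      · rw [if_pos h, if_pos h]
      · rw [if_neg h, if_neg h, zero_mul]
    · intro p _ hpne
      unfold fshiftM
      rw [if_neg fun hc => hpne (Prod.ext hc.2.symm hc.1.symm), mul_zero]
    · intro h
      exact absurd (Finset.mem_univ _) h
  rw [Finset.sum_congr rfl (fun p' _ => by rw [inner p'])]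
  rw [Finset.sum_eq_single (τ', τ)]
  · show (if τ = τ ∧ fetaUp τ τ' ≠ 0 then fc n q τ * ((fetaUp τ τ' : ℝ) : ℂ) else 0)
        * (if τ' = τ' ∧ fetaUp τ' τ ≠ 0 then fc n q τ' else 0) = _
    by_cases hη : fetaUp τ τ' = 0
    · have h1 : ¬(τ = τ ∧ fetaUp τ τ' ≠ 0) := fun hc => hc.2 hη
      rw [if_neg h1, zero_mul, hη]
      norm_num
    · have hη' : fetaUp τ' τ ≠ 0 := by rw [fetaUp_symm]; exact hη
      rw [if_pos ⟨rfl, hη⟩, if_pos ⟨rfl, hη'⟩]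
      ring
  · intro p' _ hpne
    by_cases h2 : p'.2 = τ ∧ fetaUp p'.2 p'.1 ≠ 0
    · have hne : ¬(p'.1 = τ' ∧ fetaUp p'.1 p'.2 ≠ 0) := by
        rintro ⟨hc1, _⟩
        exact hpne (Prod.ext hc1 h2.1)
      unfold fdstarM
      rw [if_neg hne, mul_zero]
    · rw [if_neg h2, zero_mul]
  · intro h
    exact absurd (Finset.mem_univ _) h

noncomputable def Phi (n q : ℕ) :
    ({A : Finset (Fin n) // A.card = q + 1} → ℂ) →ₗ[ℂ] (FullOSimp n q → ℂ) where
  toFun g := fun τ => ((bsgn τ.2 : ℝ) : ℂ) * g τ.1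
  map_add' g h := by funext τ; simp only [Pi.add_apply]; ring
  map_smul' c g := by funext τ; simp only [Pi.smul_apply, smul_eq_mul, RingHom.id_apply]; ring

lemma Phi_injective (n q : ℕ) : Function.Injective (Phi n q) := by
  intro g h hgh
  funext A
  have := congrFun hgh (A, true)
  simpa [Phi, bsgn] using this

lemma Phi_mem_fCSub (g : {A : Finset (Fin n) // A.card = q + 1} → ℂ) :
    Phi n q g ∈ fCSub n q := by
  intro τ
  show ((bsgn (!τ.2) : ℝ) : ℂ) * g τ.1 = -(((bsgn τ.2 : ℝ) : ℂ) * g τ.1)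
  cases hb : τ.2 <;> simp [bsgn] <;> ring

lemma exists_Phi {f : FullOSimp n q → ℂ} (hf : f ∈ fCSub n q) :
    ∃ g, Phi n q g = f := by
  refine ⟨fun A => f (A, true), ?_⟩
  funext τ
  obtain ⟨A, b⟩ := τ
  cases b
  · have h := hf (A, true)
    show ((bsgn false : ℝ) : ℂ) * f (A, true) = f (A, false)
    have : f (A, false) = -f (A, true) := h
    rw [this]
    simp [bsgn]
  · show ((bsgn true : ℝ) : ℂ) * f (A, true) = f (A, true)
    simp [bsgn]

lemma disc_Phi (hq : q + 2 ≤ n) (g : {A : Finset (Fin n) // A.card = q + 1} → ℂ) :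
    (fdiscM n q).mulVecLin (Phi n q g)
      = Phi n q (((((q : ℂ) + 1) * ((n : ℂ) - q - 1))⁻¹ • (Mq n q).mulVecLin) g) := by
  funext τ
  rw [Matrix.mulVecLin_apply]
  show (fdiscM n q *ᵥ (Phi n q g)) τ
      = ((bsgn τ.2 : ℝ) : ℂ) * (((((q : ℂ) + 1) * ((n : ℂ) - q - 1))⁻¹ • (Mq n q).mulVecLin) g) τ.1
  rw [Matrix.mulVec]
  show (∑ τ' : FullOSimp n q, fdiscM n q τ τ' * (Phi n q g) τ') = _
  have hterm : ∀ τ' : FullOSimp n q,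
      fdiscM n q τ τ' * (Phi n q g) τ'
        = fc n q τ * fc n q τ' * ((epsv n q τ.1.1 τ'.1.1 : ℝ) : ℂ)
            * ((bsgn τ.2 : ℝ) : ℂ) * ((bsgn τ'.2 : ℝ) : ℂ) * ((bsgn τ'.2 : ℝ) : ℂ) * g τ'.1 := by
    intro τ'
    rw [fdiscM_apply, fetaUp_eq]
    have hPhi : (Phi n q) g τ' = ((bsgn τ'.2 : ℝ) : ℂ) * g τ'.1 := rfl
    rw [hPhi]
    push_cast
    ring
  rw [Finset.sum_congr rfl (fun τ' _ => hterm τ')]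
  rw [Fintype.sum_prod_type]
  have hbool : ∀ A' : {A : Finset (Fin n) // A.card = q + 1},
      (∑ b : Bool, fc n q τ * fc n q (A', b) * ((epsv n q τ.1.1 A'.1 : ℝ) : ℂ)
          * ((bsgn τ.2 : ℝ) : ℂ) * ((bsgn b : ℝ) : ℂ) * ((bsgn b : ℝ) : ℂ) * g A')
        = (((q : ℂ) + 1) * ((n : ℂ) - q - 1))⁻¹ * ((epsv n q τ.1.1 A'.1 : ℝ) : ℂ)
            * ((bsgn τ.2 : ℝ) : ℂ) * g A' := by
    intro A'
    rw [Fintype.sum_bool]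
    have hfc : fc n q ((A', false) : FullOSimp n q) = fc n q ((A', true) : FullOSimp n q) := rfl
    have h2 := fc_mul hq τ ((A', true) : FullOSimp n q)
    rw [hfc]
    have b1 : bsgn true = 1 := rfl
    have b2 : bsgn false = -1 := rfl
    rw [b1, b2]
    push_cast
    linear_combination (((epsv n q τ.1.1 A'.1 : ℝ) : ℂ) * ((bsgn τ.2 : ℝ) : ℂ) * g A') * h2
  rw [Finset.sum_congr rfl (fun A' _ => hbool A')]
  show _ = ((bsgn τ.2 : ℝ) : ℂ)
      * ((((q : ℂ) + 1) * ((n : ℂ) - q - 1))⁻¹ • ((Mq n q) *ᵥ g)) τ.1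
  rw [Pi.smul_apply, Matrix.mulVec]
  show _ = ((bsgn τ.2 : ℝ) : ℂ)
      * ((((q : ℂ) + 1) * ((n : ℂ) - q - 1))⁻¹ * (∑ A', Mq n q τ.1 A' * g A'))
  rw [Finset.mul_sum, Finset.mul_sum]
  apply Finset.sum_congr rfl
  intro A' _
  unfold Mq
  ring

end Aux9

section Aux10
variable {n q : ℕ}

lemma fEig_eq (hq : q + 2 ≤ n) (μ : ℂ) :
    fEig n q μ = Submodule.map (Phi n q)
      (Module.End.eigenspace
        ((((q : ℂ) + 1) * ((n : ℂ) - q - 1))⁻¹ • (Mq n q).mulVecLin) μ) := by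
  ext f
  unfold fEig
  rw [Submodule.mem_inf]
  constructor
  · rintro ⟨h1, h2⟩
    obtain ⟨g, rfl⟩ := exists_Phi h2
    rw [Submodule.mem_map]
    refine ⟨g, ?_, rfl⟩
    rw [Module.End.mem_eigenspace_iff]
    apply Phi_injective n q
    rw [Module.End.mem_eigenspace_iff] at h1
    rw [← disc_Phi hq g, h1, map_smul]
  · rintro ⟨g, hg, rfl⟩
    have hg' := Module.End.mem_eigenspace_iff.mp hg
    refine ⟨?_, Phi_mem_fCSub g⟩
    rw [Module.End.mem_eigenspace_iff, disc_Phi hq g, hg', map_smul]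

end Aux10

/-- For the full `(n−1)`-dimensional simplex and `0 ≤ q ≤ n−2`, the
restriction of `D_q^up` to `C^q(K,ℂ)` has exactly the two eigenvalues `1/(n−q−1)`
(with multiplicity `binom(n−1, q+1)`) and `−1/(q+1)` (with multiplicity `binom(n−1, q)`). -/
theorem full_simplex_disc_up_eigenvalues (n q : ℕ) (hq : q + 2 ≤ n) :
    (∀ μ : ℂ, fEig n q μ ≠ ⊥ ↔ (μ = 1 / ((n : ℂ) - q - 1) ∨ μ = -(1 / ((q : ℂ) + 1)))) ∧
    Module.finrank ℂ ↥(fEig n q (1 / ((n : ℂ) - q - 1))) = Nat.choose (n - 1) (q + 1) ∧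
    Module.finrank ℂ ↥(fEig n q (-(1 / ((q : ℂ) + 1)))) = Nat.choose (n - 1) q := by
  have hq1 : ((q : ℂ) + 1) ≠ 0 := by
    have h : ((q : ℂ) + 1) = ((q + 1 : ℕ) : ℂ) := by push_cast; ring
    rw [h]; exact Nat.cast_ne_zero.mpr (by omega)
  have hd : ((n : ℂ) - q - 1) = ((n - (q + 1) : ℕ) : ℂ) := by
    rw [Nat.cast_sub (by omega : q + 1 ≤ n)]; push_cast; ring
  have hnq : ((n : ℂ) - q - 1) ≠ 0 := by
    rw [hd]; exact Nat.cast_ne_zero.mpr (by omega)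
  have hn0 : (n : ℂ) ≠ 0 := Nat.cast_ne_zero.mpr (by omega)
  set κ : ℂ := (((q : ℂ) + 1) * ((n : ℂ) - q - 1))⁻¹ with hκdef
  have hκ : κ ≠ 0 := inv_ne_zero (mul_ne_zero hq1 hnq)
  set a : ℂ := (q : ℂ) + 1 with hadef
  set b : ℂ := -((n : ℂ) - q - 1) with hbdef
  have hab2 : a - b = (n : ℂ) := by rw [hadef, hbdef]; ring
  have hab : a ≠ b := by
    intro h
    apply hn0
    rw [← hab2, h, sub_self]
  set T0 := (Mq n q).mulVecLin with hT0def
  have hquad : (T0 - a • 1) * (T0 - b • 1) = 0 := T0_quad hq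
  have hquad' : (T0 - b • 1) * (T0 - a • 1) = 0 := by
    rw [endo_comm]; exact hquad
  have hNW : (Module.finrank ℂ ({A : Finset (Fin n) // A.card = q + 1} → ℂ))
      = Nat.choose n (q + 1) := by
    rw [Module.finrank_fintype_fun_eq_card, Fintype.card_finset_len, Fintype.card_fin]
  have htr : LinearMap.trace ℂ _ T0 = 0 := trace_Mq n q
  have hfa := eig_finrank_of_quad T0 a b hab hquad
  have hfb := eig_finrank_of_quad T0 b a hab.symm hquad'
  rw [htr, hNW] at hfa hfb
  -- dimension of the a-eigenspace
  have hEa : Module.finrank ℂ (Module.End.eigenspace T0 a) = Nat.choose (n - 1) (q + 1) := by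
    have h1 := Nat.choose_succ_right_eq n (q + 1)
    have h2 := Nat.add_one_mul_choose_eq (n - 1) (q + 1)
    rw [(by omega : n - 1 + 1 = n)] at h2
    rw [h1] at h2
    have hid : n * Nat.choose (n - 1) (q + 1) = (n - (q + 1)) * Nat.choose n (q + 1) := by
      rw [h2, Nat.mul_comm]
    have hcast : ((Nat.choose (n - 1) (q + 1) : ℕ) : ℂ) * (a - b)
        = 0 - b * (Nat.choose n (q + 1) : ℂ) := by
      rw [hab2]
      have hr : (0 : ℂ) - b * (Nat.choose n (q + 1) : ℂ)
          = ((n : ℂ) - q - 1) * (Nat.choose n (q + 1) : ℂ) := by rw [hbdef]; ring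
      rw [hr, hd]
      have := congrArg (Nat.cast : ℕ → ℂ) hid
      push_cast at this
      linear_combination this
    have hfin : ((Module.finrank ℂ (Module.End.eigenspace T0 a)) : ℂ)
        = ((Nat.choose (n - 1) (q + 1) : ℕ) : ℂ) :=
      mul_right_cancel₀ (sub_ne_zero.mpr hab) (hfa.trans hcast.symm)
    exact_mod_cast hfin
  -- dimension of the b-eigenspace
  have hEb : Module.finrank ℂ (Module.End.eigenspace T0 b) = Nat.choose (n - 1) q := by
    have h2 := Nat.add_one_mul_choose_eq (n - 1) q
    rw [(by omega : n - 1 + 1 = n)] at h2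
    -- h2 : n * choose (n-1) q = choose n (q+1) * (q+1)
    have hcast : ((Nat.choose (n - 1) q : ℕ) : ℂ) * (b - a)
        = 0 - a * (Nat.choose n (q + 1) : ℂ) := by
      have hba : b - a = -(n : ℂ) := by rw [← hab2]; ring
      rw [hba, hadef]
      have := congrArg (Nat.cast : ℕ → ℂ) h2
      push_cast at this
      linear_combination -this
    have hfin : ((Module.finrank ℂ (Module.End.eigenspace T0 b)) : ℂ)
        = ((Nat.choose (n - 1) q : ℕ) : ℂ) :=
      mul_right_cancel₀ (sub_ne_zero.mpr hab.symm) (hfb.trans hcast.symm)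
    exact_mod_cast hfin
  have hμ1 : (1 : ℂ) / ((n : ℂ) - q - 1) = κ * a := by
    rw [hκdef, hadef]
    field_simp
  have hμ2 : -(1 / ((q : ℂ) + 1)) = κ * b := by
    rw [hκdef, hbdef]
    field_simp
    ring
  have hEig : ∀ μ : ℂ, fEig n q μ
      = Submodule.map (Phi n q) (Module.End.eigenspace (κ • T0) μ) := fun μ => fEig_eq hq μ
  have hmapbot : ∀ p : Submodule ℂ ({A : Finset (Fin n) // A.card = q + 1} → ℂ),
      Submodule.map (Phi n q) p = ⊥ ↔ p = ⊥ := by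
    intro p
    constructor
    · intro h
      rw [Submodule.eq_bot_iff] at h ⊢
      intro x hx
      have h0 : Phi n q x = 0 := h _ (Submodule.mem_map_of_mem hx)
      have h1 : Phi n q x = Phi n q 0 := by rw [h0, map_zero]
      exact Phi_injective n q h1
    · intro h; rw [h, Submodule.map_bot]
  have hsm : ∀ lam : ℂ, Module.End.eigenspace (κ • T0) (κ * lam)
      = Module.End.eigenspace T0 lam := fun lam => eigenspace_smul_eq κ hκ T0 lam
  have hfr : ∀ p : Submodule ℂ ({A : Finset (Fin n) // A.card = q + 1} → ℂ),
      Module.finrank ℂ (Submodule.map (Phi n q) p) = Module.finrank ℂ p :=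
    fun p => (LinearEquiv.finrank_eq (Submodule.equivMapOfInjective _ (Phi_injective n q) p)).symm
  have hbotiff : ∀ lam : ℂ, (Module.End.eigenspace T0 lam ≠ ⊥)
      → (lam = a ∨ lam = b) := fun lam h => eig_mem_of_quad T0 a b hquad h
  refine ⟨?_, ?_, ?_⟩
  · intro μ
    rw [hEig μ, Ne, hmapbot]
    constructor
    · intro hne
      have h2 : μ = κ * (κ⁻¹ * μ) := by
        field_simp
      rw [h2, hsm] at hne
      rcases hbotiff _ hne with h | h
      · left; rw [hμ1, h2, h]
      · right; rw [hμ2, h2, h]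
    · rintro (h | h)
      · rw [h, hμ1, hsm]
        intro hbot
        have hz := hEa
        rw [hbot, finrank_bot] at hz
        have hpos : 0 < Nat.choose (n - 1) (q + 1) := Nat.choose_pos (by omega)
        omega
      · rw [h, hμ2, hsm]
        intro hbot
        have hz := hEb
        rw [hbot, finrank_bot] at hz
        have hpos : 0 < Nat.choose (n - 1) q := Nat.choose_pos (by omega)
        omega
  · rw [hEig _, hfr, hμ1, hsm, hEa]
  · rw [hEig _, hfr, hμ2, hsm, hEb]
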